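/- For all n ≥ 0, c_n = Σ_{i ≥ 2} (i-1)·|B(n-2i)| + Σ_{i ≥ 4} ⌈(i-4)/4⌉·|B(n-i)|, where the first sum is over integers i with 2 ≤ 2i ≤ n and the second over integers i with 4 ≤ i ≤ n. -/

import Mathlib

/-- `pre2 s` is the multiset of all pairwise products of two distinct entries
(by position) of the multiset `s`, i.e. the summands of `e₂` evaluated at `s`. -/
def pre2 (s : Multiset ℕ) : Multiset ℕ := (Multiset.powersetCard 2 s).map Multiset.prod

open Classical in
/-- The finset of binary partitions of `n`: partitions all of whose parts are powers of 2. -/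
noncomputable def binaryPartitions (n : ℕ) : Finset (Nat.Partition n) :=
  Finset.univ.filter fun l => ∀ p ∈ l.parts, ∃ i : ℕ, p = 2 ^ i

/-- `c n = m₄(ImB₂(n))`: the total number of parts equal to 4 in the image of `pre2`
on binary partitions of `n` with at least two parts; by injectivity this equals
`∑_{λ ∈ B(n)} (m₁(λ)·m₄(λ) + C(m₂(λ), 2))`. -/
noncomputable def c (n : ℕ) : ℕ :=
  ∑ l ∈ binaryPartitions n,
    ((l.parts.count 1) * (l.parts.count 4) + Nat.choose (l.parts.count 2) 2)

lemma mem_binaryPartitions {n : ℕ} {l : Nat.Partition n} :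
    l ∈ binaryPartitions n ↔ ∀ p ∈ l.parts, ∃ i : ℕ, p = 2 ^ i := by
  simp [binaryPartitions]

lemma msum_le_of_le {m s : Multiset ℕ} (h : m ≤ s) : m.sum ≤ s.sum := by
  conv_rhs => rw [← tsub_add_cancel_of_le h, Multiset.sum_add]
  omega

/-- Remove the sub-multiset `m` from a partition of `n` containing it. -/
def subP (n : ℕ) (m : Multiset ℕ) (l : Nat.Partition n) (h : m ≤ l.parts) :
    Nat.Partition (n - m.sum) where
  parts := l.parts - m
  parts_pos := fun hp => l.parts_pos (Multiset.mem_of_le tsub_le_self hp)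
  parts_sum := by
    have h2 := congrArg Multiset.sum (tsub_add_cancel_of_le h)
    rw [Multiset.sum_add, l.parts_sum] at h2
    omega

/-- Add the multiset `m` of positive numbers to a partition of `n - m.sum`. -/
def addP (n : ℕ) (m : Multiset ℕ) (hpos : ∀ p ∈ m, 0 < p) (hs : m.sum ≤ n)
    (l : Nat.Partition (n - m.sum)) : Nat.Partition n where
  parts := l.parts + m
  parts_pos := fun hp => by
    rcases Multiset.mem_add.mp hp with h | h
    · exact l.parts_pos h
    · exact hpos _ h
  parts_sum := by rw [Multiset.sum_add, l.parts_sum]; omega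

/-- Key bijection: binary partitions of `n` containing `m` correspond to
binary partitions of `n - m.sum`. -/
lemma cardA (n : ℕ) (m : Multiset ℕ) (hm : ∀ p ∈ m, ∃ i : ℕ, p = 2 ^ i)
    (hs : m.sum ≤ n) :
    ((binaryPartitions n).filter (fun l => m ≤ l.parts)).card
      = (binaryPartitions (n - m.sum)).card := by
  have hpos : ∀ p ∈ m, 0 < p := fun p hp => by
    obtain ⟨i, rfl⟩ := hm p hp; positivity
  have key : ∀ l : Nat.Partition n,
      l ∈ (binaryPartitions n).filter (fun l => m ≤ l.parts) ↔
        ((∀ p ∈ l.parts, ∃ i : ℕ, p = 2 ^ i) ∧ m ≤ l.parts) := by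
    intro l
    simp [binaryPartitions]
  apply Finset.card_bij'
    (i := fun l hl => subP n m l ((key l).mp hl).2)
    (j := fun l _ => addP n m hpos hs l)
  case hi =>
    intro l hl
    rw [mem_binaryPartitions]
    intro p hp
    exact ((key l).mp hl).1 p (Multiset.mem_of_le tsub_le_self hp)
  case hj =>
    intro l hl
    rw [key]
    constructor
    · intro p hp
      rcases Multiset.mem_add.mp hp with h | h
      · exact mem_binaryPartitions.mp hl p h
      · exact hm p h
    · exact Multiset.le_add_left _ _
  case left_inv =>
    intro l hl
    apply Nat.Partition.ext
    show l.parts - m + m = l.parts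
    exact tsub_add_cancel_of_le ((key l).mp hl).2
  case right_inv =>
    intro l hl
    apply Nat.Partition.ext
    show l.parts + m - m = l.parts
    exact add_tsub_cancel_right _ _

lemma count_mul_le_sum (s : Multiset ℕ) (p : ℕ) : s.count p * p ≤ s.sum := by
  have h : Multiset.replicate (s.count p) p ≤ s :=
    Multiset.le_count_iff_replicate_le.mp le_rfl
  have h2 := msum_le_of_le h
  rwa [Multiset.sum_replicate, smul_eq_mul] at h2

lemma sum_Icc_pred (m : ℕ) : ∑ j ∈ Finset.Icc 2 m, (j - 1) = m.choose 2 := by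
  induction m with
  | zero => simp
  | succ k ih =>
    rcases Nat.lt_or_ge k 1 with h | h
    · interval_cases k <;> simp
    · rw [Finset.sum_Icc_succ_top (by omega), ih]
      have h2 : (k + 1).choose 2 = k.choose 1 + k.choose 2 := Nat.choose_succ_succ k 1
      simp only [Nat.choose_one_right] at h2
      omega

lemma choose_eq_sum (m M : ℕ) (h : m ≤ M) :
    (∑ j ∈ Finset.Icc 2 M, if j ≤ m then j - 1 else 0) = m.choose 2 := by
  rw [← Finset.sum_filter]
  have h2 : (Finset.Icc 2 M).filter (fun j => j ≤ m) = Finset.Icc 2 m := by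
    ext j; simp only [Finset.mem_filter, Finset.mem_Icc]; omega
  rw [h2, sum_Icc_pred]

lemma rep_add_rep_le (a b : ℕ) (s : Multiset ℕ) :
    Multiset.replicate a 1 + Multiset.replicate b 4 ≤ s ↔
      a ≤ s.count 1 ∧ b ≤ s.count 4 := by
  rw [Multiset.le_iff_count]
  constructor
  · intro h
    have h1 := h 1
    have h4 := h 4
    simp [Multiset.count_replicate] at h1 h4
    omega
  · rintro ⟨h1, h4⟩ x
    rcases eq_or_ne x 1 with rfl | hx1
    · simp [Multiset.count_replicate]
      omega
    · rcases eq_or_ne x 4 with rfl | hx4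
      · simp [Multiset.count_replicate]
        omega
      · simp [Multiset.count_replicate, Ne.symm hx1, Ne.symm hx4]
  
lemma double_count (m1 m4 N : ℕ) (h1 : m1 ≤ N) (h4 : m4 ≤ N) :
    (∑ a ∈ Finset.Icc 1 N, ∑ b ∈ Finset.Icc 1 N,
      if a ≤ m1 ∧ b ≤ m4 then 1 else 0) = m1 * m4 := by
  have inner : ∀ a : ℕ, (∑ b ∈ Finset.Icc 1 N, if a ≤ m1 ∧ b ≤ m4 then 1 else 0)
      = if a ≤ m1 then m4 else 0 := by
    intro a
    split_ifs with h
    · rw [← Finset.sum_filter]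
      have h2 : (Finset.Icc 1 N).filter (fun b => a ≤ m1 ∧ b ≤ m4) = Finset.Icc 1 m4 := by
        ext b; simp only [Finset.mem_filter, Finset.mem_Icc]; omega
      rw [h2]
      simp [Nat.card_Icc]
    · apply Finset.sum_eq_zero
      intro b _
      rw [if_neg]
      tauto
  simp only [inner]
  rw [← Finset.sum_filter]
  have h2 : (Finset.Icc 1 N).filter (fun a => a ≤ m1) = Finset.Icc 1 m1 := by
    ext a; simp only [Finset.mem_filter, Finset.mem_Icc]; omega
  rw [h2]
  simp [Nat.card_Icc]

theorem stmt_12 (n : ℕ) :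
    c n = (∑ i ∈ Finset.Icc 2 (n / 2), (i - 1) * (binaryPartitions (n - 2 * i)).card)
        + (∑ i ∈ Finset.Icc 4 n, ((i - 4 + 3) / 4) * (binaryPartitions (n - i)).card) := by
  rw [c, Finset.sum_add_distrib]
  -- Part 1: the choose part
  have part1 : (∑ l ∈ binaryPartitions n, Nat.choose (l.parts.count 2) 2)
      = ∑ i ∈ Finset.Icc 2 (n / 2), (i - 1) * (binaryPartitions (n - 2 * i)).card := by
    have step : ∀ l ∈ binaryPartitions n, Nat.choose (l.parts.count 2) 2
        = ∑ j ∈ Finset.Icc 2 (n / 2),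
            if Multiset.replicate j 2 ≤ l.parts then j - 1 else 0 := by
      intro l hl
      have hc : l.parts.count 2 * 2 ≤ n := by
        have h2 := count_mul_le_sum l.parts 2; rw [l.parts_sum] at h2; exact h2
      rw [← choose_eq_sum (l.parts.count 2) (n / 2) (by omega)]
      apply Finset.sum_congr rfl
      intro j _
      congr 1
      rw [← Multiset.le_count_iff_replicate_le]
    rw [Finset.sum_congr rfl step, Finset.sum_comm]
    apply Finset.sum_congr rfl
    intro j hj
    rw [Finset.mem_Icc] at hj
    rw [← Finset.sum_filter]
    have hrep : (Multiset.replicate j 2).sum = 2 * j := by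
      rw [Multiset.sum_replicate, smul_eq_mul]; omega
    have h2j : 2 * j ≤ n := by
      have := hj.2; omega
    rw [Finset.sum_const, smul_eq_mul, mul_comm]
    congr 1
    rw [cardA n (Multiset.replicate j 2)
      (fun p hp => ⟨1, by simpa using (Multiset.eq_of_mem_replicate hp)⟩)
      (by omega), hrep]
  -- Part 2: the product part
  have part2 : (∑ l ∈ binaryPartitions n, l.parts.count 1 * l.parts.count 4)
      = ∑ i ∈ Finset.Icc 4 n, ((i - 4 + 3) / 4) * (binaryPartitions (n - i)).card := by
    have step : ∀ l ∈ binaryPartitions n, l.parts.count 1 * l.parts.count 4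
        = ∑ a ∈ Finset.Icc 1 n, ∑ b ∈ Finset.Icc 1 n,
            if Multiset.replicate a 1 + Multiset.replicate b 4 ≤ l.parts then 1 else 0 := by
      intro l hl
      have hc1 : l.parts.count 1 * 1 ≤ n := by
        have h2 := count_mul_le_sum l.parts 1; rw [l.parts_sum] at h2; exact h2
      have hc4 : l.parts.count 4 * 4 ≤ n := by
        have h2 := count_mul_le_sum l.parts 4; rw [l.parts_sum] at h2; exact h2
      rw [← double_count (l.parts.count 1) (l.parts.count 4) n (by omega) (by omega)]
      apply Finset.sum_congr rfl
      intro a _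
      apply Finset.sum_congr rfl
      intro b _
      congr 1
      rw [eq_iff_iff]
      exact (rep_add_rep_le a b l.parts).symm
    rw [Finset.sum_congr rfl step, Finset.sum_comm]
    have inner2 : ∀ a ∈ Finset.Icc 1 n,
        (∑ l ∈ binaryPartitions n, ∑ b ∈ Finset.Icc 1 n,
          if Multiset.replicate a 1 + Multiset.replicate b 4 ≤ l.parts then 1 else 0)
        = ∑ b ∈ Finset.Icc 1 n,
            if a + 4 * b ≤ n then (binaryPartitions (n - (a + 4 * b))).card else 0 := by
      intro a _
      rw [Finset.sum_comm]
      apply Finset.sum_congr rfl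
      intro b _
      rw [← Finset.sum_filter, Finset.sum_const, smul_eq_mul, mul_one]
      have hms : (Multiset.replicate a 1 + Multiset.replicate b 4).sum = a + 4 * b := by
        rw [Multiset.sum_add, Multiset.sum_replicate, Multiset.sum_replicate,
          smul_eq_mul, smul_eq_mul]
        omega
      split_ifs with h
      · rw [cardA n (Multiset.replicate a 1 + Multiset.replicate b 4) ?_ (by omega), hms]
        intro p hp
        rcases Multiset.mem_add.mp hp with hp | hp
        · exact ⟨0, by simpa using Multiset.eq_of_mem_replicate hp⟩
        · exact ⟨2, by simpa using Multiset.eq_of_mem_replicate hp⟩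
      · rw [Finset.card_eq_zero]
        apply Finset.filter_eq_empty_iff.mpr
        intro l _
        intro hle
        have h2 := msum_le_of_le hle
        rw [hms, l.parts_sum] at h2
        omega
    rw [Finset.sum_congr rfl inner2]
    -- Now reindex the double sum
    have lhs_eq : (∑ a ∈ Finset.Icc 1 n, ∑ b ∈ Finset.Icc 1 n,
        if a + 4 * b ≤ n then (binaryPartitions (n - (a + 4 * b))).card else 0)
        = ∑ p ∈ (Finset.Icc 1 n ×ˢ Finset.Icc 1 n).filter (fun p => p.1 + 4 * p.2 ≤ n),
            (binaryPartitions (n - (p.1 + 4 * p.2))).card := by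
      rw [Finset.sum_filter, Finset.sum_product]
    have rhs_eq : (∑ i ∈ Finset.Icc 4 n, ((i - 4 + 3) / 4) * (binaryPartitions (n - i)).card)
        = ∑ p ∈ (Finset.Icc 4 n ×ˢ Finset.Icc 1 n).filter (fun p => 4 * p.2 + 1 ≤ p.1),
            (binaryPartitions (n - p.1)).card := by
      rw [Finset.sum_filter, Finset.sum_product]
      dsimp only
      apply Finset.sum_congr rfl
      intro i hi
      rw [Finset.mem_Icc] at hi
      rw [← Finset.sum_filter]
      have h2 : (Finset.Icc 1 n).filter (fun b => 4 * b + 1 ≤ i)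
          = Finset.Icc 1 ((i - 4 + 3) / 4) := by
        ext b; simp only [Finset.mem_filter, Finset.mem_Icc]; omega
      rw [h2, Finset.sum_const, smul_eq_mul]
      congr 1
      rw [Nat.card_Icc]
      omega
    rw [lhs_eq, rhs_eq]
    apply Finset.sum_nbij' (i := fun p => (p.1 + 4 * p.2, p.2))
      (j := fun p => (p.1 - 4 * p.2, p.2))
    case hi =>
      rintro ⟨a, b⟩ hp
      simp only [Finset.mem_filter, Finset.mem_product, Finset.mem_Icc] at hp ⊢
      omega
    case hj =>
      rintro ⟨a, b⟩ hp
      simp only [Finset.mem_filter, Finset.mem_product, Finset.mem_Icc] at hp ⊢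
      omega
    case left_neg =>
      rintro ⟨a, b⟩ hp
      simp only [Finset.mem_filter, Finset.mem_product, Finset.mem_Icc] at hp
      simp only [Prod.mk.injEq, Prod.fst, Prod.snd]
      exact ⟨by omega, trivial⟩
    case right_neg =>
      rintro ⟨a, b⟩ hp
      simp only [Finset.mem_filter, Finset.mem_product, Finset.mem_Icc] at hp
      simp only [Prod.mk.injEq, Prod.fst, Prod.snd]
      exact ⟨by omega, trivial⟩
    case h =>
      rintro ⟨a, b⟩ hp
      rfl
  rw [part1, part2]
  omega
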